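/- Suppose K ⊆ ℚ̄ is a field closed under square roots in which every polynomial of degree at most 3 with coefficients in K splits. Then every polynomial of degree 4 with coefficients in K splits in K. -/

import Mathlib

open Polynomial

private abbrev Qbar := AlgebraicClosure ℚ

/-- Roots of monic quadratics with coefficients in `K` lie in `K`. -/
private lemma quad_root (K : Subfield Qbar)
    (hcubic : ∀ p : Qbar[X], p ≠ 0 → p.natDegree ≤ 3 →
      (∀ i, p.coeff i ∈ K) → ∀ z : Qbar, p.eval z = 0 → z ∈ K)
    {b c z : Qbar} (hb : b ∈ K) (hc : c ∈ K)
    (hz : z ^ 2 + b * z + c = 0) : z ∈ K := by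
  refine hcubic (C 1 * X ^ 2 + C b * X + C c) ?_ (natDegree_quadratic_le.trans (by norm_num))
    ?_ z ?_
  · intro h
    have := congrArg (fun q => Polynomial.coeff q 2) h
    simp [coeff_C] at this
  · intro i
    rcases i with _ | _ | _ | i <;>
      simp [coeff_C, K.zero_mem, hb, hc, K.one_mem]
  · simp only [eval_add, eval_mul, eval_C, eval_pow, eval_X, one_mul]
    exact hz

/-- Cubics with coefficients in `K` (nonzero leading coefficient) have a root, in `K`. -/
private lemma cubic_root (K : Subfield Qbar)
    (hcubic : ∀ p : Qbar[X], p ≠ 0 → p.natDegree ≤ 3 →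
      (∀ i, p.coeff i ∈ K) → ∀ z : Qbar, p.eval z = 0 → z ∈ K)
    {e3 e2 e1 e0 : Qbar} (h3 : e3 ∈ K) (h2 : e2 ∈ K) (h1 : e1 ∈ K) (h0 : e0 ∈ K)
    (hne : e3 ≠ 0) :
    ∃ t ∈ K, e3 * t ^ 3 + e2 * t ^ 2 + e1 * t + e0 = 0 := by
  obtain ⟨t, ht⟩ := IsAlgClosed.exists_root (C e3 * X ^ 3 + C e2 * X ^ 2 + C e1 * X + C e0)
    (by rw [degree_cubic hne]; norm_num)
  have heval : e3 * t ^ 3 + e2 * t ^ 2 + e1 * t + e0 = 0 := by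
    have := ht
    simp only [IsRoot, eval_add, eval_mul, eval_C, eval_pow, eval_X] at this
    exact this
  refine ⟨t, ?_, heval⟩
  refine hcubic _ ?_ natDegree_cubic_le ?_ t ht
  · intro h
    have := congrArg (fun q => Polynomial.coeff q 3) h
    simp [coeff_C] at this
    exact hne this
  · intro i
    rcases i with _ | _ | _ | _ | i <;>
      simp [coeff_C, K.zero_mem, h3, h2, h1, h0]

/-- Key computation: a root of a monic quartic equation with coefficients in `K` lies in `K`. -/
private lemma monic_quartic_root (K : Subfield Qbar)
    (hsq : ∀ a ∈ K, ∀ b : Qbar, b ^ 2 = a → b ∈ K)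
    (hcubic : ∀ p : Qbar[X], p ≠ 0 → p.natDegree ≤ 3 →
      (∀ i, p.coeff i ∈ K) → ∀ z : Qbar, p.eval z = 0 → z ∈ K)
    {a b c d z : Qbar} (ha : a ∈ K) (hb : b ∈ K) (hc : c ∈ K) (hd : d ∈ K)
    (hz : z ^ 4 + a * z ^ 3 + b * z ^ 2 + c * z + d = 0) : z ∈ K := by
  have h2K : (2 : Qbar) ∈ K := by simpa using natCast_mem K 2
  have h4K : (4 : Qbar) ∈ K := by simpa using natCast_mem K 4
  have h3K : (3 : Qbar) ∈ K := by simpa using natCast_mem K 3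
  have h8K : (8 : Qbar) ∈ K := by simpa using natCast_mem K 8
  -- depressed quartic
  set w : Qbar := z + a / 4 with hw
  set P : Qbar := b - 3 * a ^ 2 / 8 with hP
  set Q : Qbar := c - a * b / 2 + a ^ 3 / 8 with hQ
  set R : Qbar := d - a * c / 4 + a ^ 2 * b / 16 - 3 * a ^ 4 / 256 with hR
  have hPK : P ∈ K := K.sub_mem hb (K.div_mem (K.mul_mem h3K (K.pow_mem ha 2)) h8K)
  have hQK : Q ∈ K := K.add_mem (K.sub_mem hc (K.div_mem (K.mul_mem ha hb) h2K))
    (K.div_mem (K.pow_mem ha 3) h8K)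
  have h16K : (16 : Qbar) ∈ K := by simpa using natCast_mem K 16
  have h256K : (256 : Qbar) ∈ K := by simpa using natCast_mem K 256
  have hRK : R ∈ K := K.sub_mem (K.add_mem (K.sub_mem hd (K.div_mem (K.mul_mem ha hc) h4K))
    (K.div_mem (K.mul_mem (K.pow_mem ha 2) hb) h16K))
    (K.div_mem (K.mul_mem h3K (K.pow_mem ha 4)) h256K)
  have hwK : w ∈ K → z ∈ K := by
    intro h
    have : z = w - a / 4 := by rw [hw]; ring
    rw [this]
    exact K.sub_mem h (K.div_mem ha h4K)
  apply hwK
  have heq : w ^ 4 + P * w ^ 2 + Q * w + R = 0 := by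
    rw [hw, hP, hQ, hR]
    linear_combination hz
  clear_value w
  by_cases hQ0 : Q = 0
  · -- biquadratic case: w^2 is a root of a quadratic
    have hw2 : (w ^ 2) ^ 2 + P * (w ^ 2) + R = 0 := by
      rw [hQ0] at heq; linear_combination heq
    have : w ^ 2 ∈ K := quad_root K hcubic hPK hRK hw2
    exact hsq _ this w rfl
  · -- Ferrari: resolvent cubic 8t^3 + 8P t^2 + (2P^2-8R) t - Q^2 = 0
    obtain ⟨t, htK, ht⟩ := cubic_root K hcubic h8K (K.mul_mem h8K hPK)
      (K.sub_mem (K.mul_mem h2K (K.pow_mem hPK 2)) (K.mul_mem h8K hRK))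
      (K.neg_mem (K.pow_mem hQK 2)) (by norm_num : (8 : Qbar) ≠ 0)
    have ht0 : t ≠ 0 := by
      intro h
      rw [h] at ht
      apply hQ0
      have : Q ^ 2 = 0 := by linear_combination -ht
      exact pow_eq_zero_iff (by norm_num) |>.mp this
    obtain ⟨s, hs⟩ := IsAlgClosed.exists_pow_nat_eq (2 * t) (n := 2) (by norm_num)
    have hsK : s ∈ K := hsq _ (K.mul_mem h2K htK) s hs
    have hs0 : s ≠ 0 := by
      intro h
      rw [h] at hs
      have : t = 0 := by
        have h2 : (2 : Qbar) ≠ 0 := by norm_num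
        field_simp at hs
        have h2t : (2 : Qbar) * t = 0 := by rw [← hs]; norm_num
        exact (mul_eq_zero.mp h2t).resolve_left h2
      exact ht0 this
    have hss : s ^ 2 = 2 * t := hs
    have key2 : 8 * t * (w ^ 2 + P / 2 + t) ^ 2 = (4 * t * w - Q) ^ 2 := by
      linear_combination 8 * t * heq + ht
    have hfac : (w ^ 2 + P / 2 + t - (s * w - Q / (2 * s)))
        * (w ^ 2 + P / 2 + t + (s * w - Q / (2 * s))) = 0 := by
      have hinv : s * s⁻¹ = 1 := mul_inv_cancel₀ hs0
      have h8t : (8 : Qbar) * t ≠ 0 := mul_ne_zero (by norm_num) ht0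
      refine (mul_eq_zero.mp ?_).resolve_left h8t
      linear_combination key2 + (-8 * t * w ^ 2 + Q ^ 2 * s⁻¹ ^ 2) * hss - Q ^ 2 * (s * s⁻¹ + 1) * hinv + 8 * t * Q * w * hinv
    rcases mul_eq_zero.mp hfac with h | h
    · -- w^2 - s w + (P/2 + t + Q/(2s)) = 0
      refine quad_root K hcubic (b := -s) (c := P / 2 + t + Q / (2 * s)) (K.neg_mem hsK)
        (K.add_mem (K.add_mem (K.div_mem hPK h2K) htK)
          (K.div_mem hQK (K.mul_mem h2K hsK))) ?_
      linear_combination h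
    · refine quad_root K hcubic (b := s) (c := P / 2 + t - Q / (2 * s)) hsK
        (K.sub_mem (K.add_mem (K.div_mem hPK h2K) htK)
          (K.div_mem hQK (K.mul_mem h2K hsK))) ?_
      linear_combination h

theorem stmt_17 (K : Subfield (AlgebraicClosure ℚ))
    (hsq : ∀ a ∈ K, ∀ b : AlgebraicClosure ℚ, b ^ 2 = a → b ∈ K)
    (hcubic : ∀ p : (AlgebraicClosure ℚ)[X], p ≠ 0 → p.natDegree ≤ 3 →
      (∀ i, p.coeff i ∈ K) → ∀ z : AlgebraicClosure ℚ, p.eval z = 0 → z ∈ K) :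
    ∀ p : (AlgebraicClosure ℚ)[X], p.natDegree = 4 →
      (∀ i, p.coeff i ∈ K) → ∀ z : AlgebraicClosure ℚ, p.eval z = 0 → z ∈ K := by
  intro p hdeg hcoef z hz
  have hp0 : p ≠ 0 := fun h => by simp [h] at hdeg
  have ha4 : p.coeff 4 ≠ 0 := by
    rw [← hdeg]
    exact leadingCoeff_ne_zero.mpr hp0
  have heval : p.eval z = ∑ i ∈ Finset.range 5, p.coeff i * z ^ i :=
    eval_eq_sum_range' (by omega) z
  rw [heval] at hz
  simp only [Finset.sum_range_succ, Finset.sum_range_zero, zero_add] at hz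
  set a0 := p.coeff 0; set a1 := p.coeff 1; set a2 := p.coeff 2
  set a3 := p.coeff 3; set a4 := p.coeff 4
  have hmonic : z ^ 4 + (a3 / a4) * z ^ 3 + (a2 / a4) * z ^ 2 + (a1 / a4) * z + a0 / a4 = 0 := by
    field_simp
    linear_combination hz
  exact monic_quartic_root K hsq hcubic (K.div_mem (hcoef 3) (hcoef 4))
    (K.div_mem (hcoef 2) (hcoef 4)) (K.div_mem (hcoef 1) (hcoef 4))
    (K.div_mem (hcoef 0) (hcoef 4)) hmonic
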